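/- arXiv:1312.5135 — 2 statements merged into one kernel-verified Lean document; each statement's English description precedes it below -/
import Mathlib

section
/- (Inductive step of the mirroring strategy.) Let n be odd and let S be a finite set of pairwise non-attacking positions on the n×n board such that the central position ((n−1)/2, (n−1)/2) belongs to S and S is closed under the half-turn rotation ρ(r,c) = (n−1−r, n−1−c). Suppose p is a position on the board that is not in S and is not attacked by any element of S. Then ρ(p) is not in S ∪ {p}, ρ(p) is not attacked by any element of S ∪ {p}, and the set S ∪ {p, ρ(p)} is pairwise non-attacking, contains the central position, is closed under ρ, and has cardinality |S| + 2. -/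
/-- A position `(r, c)` lies on the `n × n` board iff `0 ≤ r, c ≤ n - 1`. -/
def onBoard (n : ℕ) (p : ℕ × ℕ) : Prop := p.1 ≤ n - 1 ∧ p.2 ≤ n - 1

/-- Two distinct positions attack each other iff they share a row, a column,
a falling diagonal, or a rising diagonal. -/
def attacks (p q : ℕ × ℕ) : Prop :=
  p ≠ q ∧ (p.1 = q.1 ∨ p.2 = q.2 ∨ p.1 + p.2 = q.1 + q.2 ∨ p.1 + q.2 = q.1 + p.2)

/-- The half-turn rotation `ρ(r, c) = (n - 1 - r, n - 1 - c)` of the `n × n` board. -/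
def rot (n : ℕ) (p : ℕ × ℕ) : ℕ × ℕ := (n - 1 - p.1, n - 1 - p.2)

/-- The central position of the `n × n` board for odd `n`. -/
def center (n : ℕ) : ℕ × ℕ := ((n - 1) / 2, (n - 1) / 2)


lemma attacks_symm {p q : ℕ × ℕ} (h : attacks p q) : attacks q p := by
  obtain ⟨h1, h2⟩ := h
  exact ⟨Ne.symm h1, by omega⟩

lemma rot_rot {n : ℕ} {p : ℕ × ℕ} (h : onBoard n p) : rot n (rot n p) = p := by
  obtain ⟨h1, h2⟩ := h
  simp only [rot, Prod.ext_iff]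
  omega

lemma rot_onBoard {n : ℕ} (p : ℕ × ℕ) : onBoard n (rot n p) := by
  constructor <;> simp [rot] <;> omega

lemma attacks_rot {n : ℕ} {p q : ℕ × ℕ} (hp : onBoard n p) (hq : onBoard n q) :
    attacks (rot n p) (rot n q) ↔ attacks p q := by
  obtain ⟨h1, h2⟩ := hp
  obtain ⟨h3, h4⟩ := hq
  simp only [attacks, rot, Prod.ext_iff, ne_eq, not_and_or]
  constructor <;> rintro ⟨ha, hb⟩ <;> refine ⟨?_, by omega⟩ <;> omega

/-- Inductive step of the mirroring strategy: if S is a pairwise non-attacking,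
ρ-closed set of board positions containing the center, and p is a board position
not in S and not attacked by any element of S, then ρ(p) is not in S ∪ {p}, is
not attacked by any element of S ∪ {p}, and S ∪ {p, ρ(p)} is pairwise
non-attacking, contains the center, is closed under ρ, and has cardinality
|S| + 2. -/
theorem mirroring_step (n : ℕ) (hn : Odd n) (S : Finset (ℕ × ℕ))
    (hb : ∀ p ∈ S, onBoard n p)
    (hna : ∀ p ∈ S, ∀ q ∈ S, p ≠ q → ¬ attacks p q)
    (hcen : center n ∈ S)
    (hcl : ∀ p ∈ S, rot n p ∈ S)
    (p : ℕ × ℕ) (hp : onBoard n p) (hpS : p ∉ S)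
    (hpat : ∀ q ∈ S, ¬ attacks q p) :
    rot n p ∉ insert p S ∧
    (∀ q ∈ insert p S, ¬ attacks q (rot n p)) ∧
    (∀ a ∈ insert (rot n p) (insert p S), ∀ b ∈ insert (rot n p) (insert p S),
      a ≠ b → ¬ attacks a b) ∧
    center n ∈ insert (rot n p) (insert p S) ∧
    (∀ a ∈ insert (rot n p) (insert p S), rot n a ∈ insert (rot n p) (insert p S)) ∧
    (insert (rot n p) (insert p S)).card = S.card + 2 := by
  obtain ⟨k, hk⟩ := hn
  have hpc : p ≠ center n := fun h => hpS (h ▸ hcen)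
  have hcat : ¬ attacks (center n) p := hpat _ hcen
  -- p does not attack rot p
  have hprp : ¬ attacks p (rot n p) := by
    intro ⟨ha, hb'⟩
    apply hcat
    obtain ⟨h1, h2⟩ := hp
    refine ⟨Ne.symm hpc, ?_⟩
    simp only [rot] at hb'
    simp only [center, ne_eq, Prod.ext_iff, not_and_or] at hpc ⊢
    omega
  have hrpne : rot n p ≠ p := by
    intro h
    exact hprp (h ▸ (by
      obtain ⟨h1, h2⟩ := hp
      have : p ≠ rot n p := by
        simp only [rot, ne_eq, Prod.ext_iff, not_and_or]
        simp only [center, Prod.ext_iff, not_and_or, ne_eq] at hpc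
        omega
      exact absurd h.symm this))
  have hrpS : rot n p ∉ S := by
    intro h
    have := hcl _ h
    rw [rot_rot hp] at this
    exact hpS this
  have hrp_not : rot n p ∉ insert p S := by
    simp only [Finset.mem_insert]
    rintro (h | h)
    · exact hrpne h
    · exact hrpS h
  -- no q in insert p S attacks rot p
  have key : ∀ q ∈ S, ¬ attacks q (rot n p) := by
    intro q hq hatt
    have hq' := hb q hq
    have : attacks (rot n q) (rot n (rot n p)) :=
      (attacks_rot hq' (rot_onBoard p)).mpr hatt
    rw [rot_rot hp] at this
    exact hpat _ (hcl q hq) this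
  have key2 : ∀ q ∈ insert p S, ¬ attacks q (rot n p) := by
    intro q hq
    rcases Finset.mem_insert.mp hq with h | h
    · exact h ▸ hprp
    · exact key q h
  refine ⟨hrp_not, key2, ?_, ?_, ?_, ?_⟩
  · intro a ha b hb' hab hatt
    rcases Finset.mem_insert.mp ha with ha | ha <;> rcases Finset.mem_insert.mp hb' with hb'' | hb''
    · exact hab (ha.trans hb''.symm)
    · rcases Finset.mem_insert.mp hb'' with h | h
      · exact key2 b (Finset.mem_insert.mpr (Or.inl h)) (ha ▸ attacks_symm hatt)
      · exact key b (by simpa [h]) (ha ▸ attacks_symm hatt)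
    · rcases Finset.mem_insert.mp ha with h | h
      · exact key2 a (Finset.mem_insert.mpr (Or.inl h)) (hb'' ▸ hatt)
      · exact key a (by simpa [h]) (hb'' ▸ hatt)
    · rcases Finset.mem_insert.mp ha with h | h <;> rcases Finset.mem_insert.mp hb'' with h' | h'
      · exact hab (h.trans h'.symm)
      · exact hpat b h' (h ▸ attacks_symm hatt)
      · exact hpat a h (h' ▸ hatt)
      · exact hna a h b h' hab hatt
  · exact Finset.mem_insert.mpr (Or.inr (Finset.mem_insert.mpr (Or.inr hcen)))
  · intro a ha
    rcases Finset.mem_insert.mp ha with h | h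
    · subst h; rw [rot_rot hp]; exact Finset.mem_insert.mpr (Or.inr (Finset.mem_insert_self _ _))
    · rcases Finset.mem_insert.mp h with h' | h'
      · subst h'; exact Finset.mem_insert_self _ _
      · exact Finset.mem_insert.mpr (Or.inr (Finset.mem_insert.mpr (Or.inr (hcl a h'))))
  · rw [Finset.card_insert_of_notMem hrp_not, Finset.card_insert_of_notMem hpS]
end

section
/- On the 4×4 board, each of the two sets {(1,1), (0,3), (3,2)} and {(1,1), (3,0), (2,3)} is pairwise non-attacking, and each is maximal: every position of the 4×4 board outside the set is attacked by some element of the set. (Hence in the queens placing game on the 4×4 board, after the first player opens at an inner cell and replies to the second player's move with the unique compatible cell, no legal move remains, so the first player, having made the last move, wins.) -/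
instance : DecidablePred (onBoard 4) := fun p => by unfold onBoard; infer_instance
instance (p q : ℕ × ℕ) : Decidable (attacks p q) := by unfold attacks; infer_instance

lemma maxi (S : Finset (ℕ × ℕ)) (h : ∀ r ≤ 3, ∀ c ≤ 3, ((r,c) : ℕ × ℕ) ∉ S → ∃ q ∈ S, attacks q (r,c)) :
    ∀ p : ℕ × ℕ, onBoard 4 p → p ∉ S → ∃ q ∈ S, attacks q p := by
  rintro ⟨r, c⟩ ⟨hr, hc⟩ hp
  exact h r hr c hc hp

/-- On the 4 × 4 board, each of the sets {(1,1), (0,3), (3,2)} and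
{(1,1), (3,0), (2,3)} is pairwise non-attacking and maximal: every board
position outside the set is attacked by some element of the set. -/
theorem maximal_sets_4x4 :
    (∀ p ∈ ({(1, 1), (0, 3), (3, 2)} : Finset (ℕ × ℕ)),
      ∀ q ∈ ({(1, 1), (0, 3), (3, 2)} : Finset (ℕ × ℕ)), p ≠ q → ¬ attacks p q) ∧
    (∀ p : ℕ × ℕ, onBoard 4 p → p ∉ ({(1, 1), (0, 3), (3, 2)} : Finset (ℕ × ℕ)) →
      ∃ q ∈ ({(1, 1), (0, 3), (3, 2)} : Finset (ℕ × ℕ)), attacks q p) ∧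
    (∀ p ∈ ({(1, 1), (3, 0), (2, 3)} : Finset (ℕ × ℕ)),
      ∀ q ∈ ({(1, 1), (3, 0), (2, 3)} : Finset (ℕ × ℕ)), p ≠ q → ¬ attacks p q) ∧
    (∀ p : ℕ × ℕ, onBoard 4 p → p ∉ ({(1, 1), (3, 0), (2, 3)} : Finset (ℕ × ℕ)) →
      ∃ q ∈ ({(1, 1), (3, 0), (2, 3)} : Finset (ℕ × ℕ)), attacks q p) := by
  refine ⟨by decide, maxi _ ?_, by decide, maxi _ ?_⟩ <;>
    (intro r hr c hc; interval_cases r <;> interval_cases c <;> revert hc <;> decide)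
end
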